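/- Let x, y, x', y', u, v : List α, let C : ℕ, and let I ⊆ ℕ be an infinite set. If levenshtein (x ++ u^k ++ y) (x' ++ v^k ++ y') ≤ C for every k ∈ I, then u and v have equal length, i.e., u.length = v.length. -/

import Mathlib

/-- `wpow u k` is the k-fold concatenation `u ++ u ++ ⋯ ++ u` (k copies). -/
def wpow {α : Type*} (u : List α) (k : ℕ) : List α := (List.replicate k u).flatten

namespace Levenshtein

/-- A cost structure for Levenshtein edit distance (as in Mathlib, Dec 2024). -/
structure Cost (α β δ : Type*) where
  delete : α → δ
  insert : β → δ
  substitute : α → β → δ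

/-- The default cost structure: each insertion, deletion and substitution costs 1. -/
def defaultCost {α : Type*} [DecidableEq α] : Cost α α ℕ where
  delete _ := 1
  insert _ := 1
  substitute a b := if a = b then 0 else 1

/-- Inner loop of the Levenshtein dynamic programme (as in Mathlib, Dec 2024). -/
def impl {α β δ : Type*} [AddZeroClass δ] [Min δ] (C : Cost α β δ) (xs : List α) (y : β)
    (d : {r : List δ // 0 < r.length}) : {r : List δ // 0 < r.length} :=
  let ⟨ds, w⟩ := d
  xs.zip (ds.zip ds.tail) |>.foldr
    (init := ⟨[C.insert y + ds.getLast (List.ne_nil_of_length_pos w)], by simp⟩)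
    (fun ⟨x, d₀, d₁⟩ ⟨r, w⟩ =>
      ⟨min (C.delete x + r[0]) (min (C.insert y + d₀) (C.substitute x y + d₁)) :: r, by simp⟩)

end Levenshtein

open Levenshtein in
/-- Levenshtein distances of all suffixes of `xs` to `ys` (as in Mathlib, Dec 2024). -/
def suffixLevenshtein {α β δ : Type*} [AddZeroClass δ] [Min δ] (C : Cost α β δ)
    (xs : List α) (ys : List β) : {r : List δ // 0 < r.length} :=
  ys.foldr
    (impl C xs)
    (xs.foldr (init := ⟨[0], by simp⟩) (fun a ⟨r, w⟩ => ⟨(C.delete a + r[0]) :: r, by simp⟩))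

open Levenshtein in
/-- Levenshtein edit distance with cost structure `C` (as in Mathlib, Dec 2024). -/
def levenshtein {α β δ : Type*} [AddZeroClass δ] [Min δ] (C : Cost α β δ)
    (xs : List α) (ys : List β) : δ :=
  let ⟨r, _⟩ := suffixLevenshtein C xs ys
  r[0]

namespace Levenshtein

variable {α β δ : Type*} [AddZeroClass δ] [Min δ] (C : Cost α β δ)

@[simp] theorem defaultCost_delete [DecidableEq α] (a : α) :
    (defaultCost : Cost α α ℕ).delete a = 1 := rfl

@[simp] theorem defaultCost_insert [DecidableEq α] (a : α) :
    (defaultCost : Cost α α ℕ).insert a = 1 := rfl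

theorem impl_cons {x : α} {xs : List α} {y : β} {d : δ} {ds : List δ} {w} (w' : 0 < List.length ds) :
    impl C (x :: xs) y ⟨d :: ds, w⟩ =
      let ⟨r, w⟩ := impl C xs y ⟨ds, w'⟩
      ⟨min (C.delete x + r[0]) (min (C.insert y + d) (C.substitute x y + ds[0])) :: r, by simp⟩ :=
  match ds, w' with | _ :: _, _ => rfl

theorem impl_length {xs : List α} {y : β} (d : {r : List δ // 0 < r.length})
    (w : d.1.length = xs.length + 1) :
    (impl C xs y d).1.length = xs.length + 1 := by
  induction xs generalizing d with
  | nil => rfl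
  | cons x xs ih =>
    dsimp [impl]
    match d, w with
    | ⟨d₁ :: d₂ :: ds, _⟩, w =>
      dsimp
      congr 1
      exact ih ⟨d₂ :: ds, (by simp)⟩ (by simpa using w)

end Levenshtein

open Levenshtein in
theorem suffixLevenshtein_length {α β δ : Type*} [AddZeroClass δ] [Min δ] (C : Cost α β δ)
    (xs : List α) (ys : List β) :
    (suffixLevenshtein C xs ys).1.length = xs.length + 1 := by
  induction ys with
  | nil =>
    dsimp [suffixLevenshtein]
    induction xs with
    | nil => rfl
    | cons _ xs ih =>
      simp_all
  | cons y ys ih =>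
    dsimp [suffixLevenshtein]
    rw [impl_length]
    exact ih

theorem suffixLevenshtein_cons₁_aux {α} {x y : {r : List α // 0 < r.length}}
    (w₀ : x.1[0]'x.2 = y.1[0]'y.2) (w : x.1.tail = y.1.tail) : x = y := by
  match x, y with
  | ⟨hx :: tx, _⟩, ⟨hy :: ty, _⟩ => simp_all

open Levenshtein in
theorem suffixLevenshtein_cons₁ {α β δ : Type*} [AddZeroClass δ] [Min δ] (C : Cost α β δ)
    (x : α) (xs : List α) (ys : List β) :
    suffixLevenshtein C (x :: xs) ys =
      ⟨levenshtein C (x :: xs) ys ::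
        (suffixLevenshtein C xs ys).1, by simp⟩ := by
  induction ys with
  | nil => rfl
  | cons y ys ih =>
    apply suffixLevenshtein_cons₁_aux
    · rfl
    · show (impl C (x :: xs) y (suffixLevenshtein C (x :: xs) ys)).1.tail = _
      rw [ih, impl_cons]
      · rfl
      · simp [suffixLevenshtein_length]

theorem getLast_eq_zero_of_len_one {δ : Type*} :
    ∀ (l : List δ) (h : l ≠ []) (hp : 0 < l.length), l.length = 1 → l.getLast h = l[0]'hp
  | [], h, _, _ => absurd rfl h
  | [_], _, _, _ => rfl
  | _ :: _ :: _, _, _, h => by simp at h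

open Levenshtein in
theorem levenshtein_nil_cons {α β δ : Type*} [AddZeroClass δ] [Min δ] (C : Cost α β δ)
    (y : β) (ys : List β) :
    levenshtein C ([] : List α) (y :: ys) = C.insert y + levenshtein C [] ys := by
  show C.insert y + (suffixLevenshtein C ([] : List α) ys).1.getLast
      (List.ne_nil_of_length_pos (suffixLevenshtein C ([] : List α) ys).2) =
    C.insert y + (suffixLevenshtein C ([] : List α) ys).1[0]'(suffixLevenshtein C ([] : List α) ys).2
  congr 1
  exact getLast_eq_zero_of_len_one _ _ _ (suffixLevenshtein_length C [] ys)

open Levenshtein in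
theorem levenshtein_cons_nil {α β δ : Type*} [AddZeroClass δ] [Min δ] (C : Cost α β δ)
    (x : α) (xs : List α) :
    levenshtein C (x :: xs) ([] : List β) = C.delete x + levenshtein C xs [] := rfl

open Levenshtein in
theorem levenshtein_cons_cons {α β δ : Type*} [AddZeroClass δ] [Min δ] (C : Cost α β δ)
    (x : α) (xs : List α) (y : β) (ys : List β) :
    levenshtein C (x :: xs) (y :: ys) =
      min (C.delete x + levenshtein C xs (y :: ys))
        (min (C.insert y + levenshtein C (x :: xs) ys)
          (C.substitute x y + levenshtein C xs ys)) := by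
  show (impl C (x :: xs) y (suffixLevenshtein C (x :: xs) ys)).1[0]'(by
    rw [impl_length]; · simp
    · exact suffixLevenshtein_length C _ _) = _
  simp only [suffixLevenshtein_cons₁]
  have hc := impl_cons C (x := x) (xs := xs) (y := y) (d := levenshtein C (x :: xs) ys)
    (ds := (suffixLevenshtein C xs ys).1) (w := by simp) (suffixLevenshtein C xs ys).2
  simp only [hc]
  rfl


lemma wpow_length {α : Type*} (u : List α) (k : ℕ) : (wpow u k).length = k * u.length := by
  simp [wpow]

lemma lev_len_le {α : Type*} [DecidableEq α] :
    ∀ xs ys : List α,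
      xs.length ≤ levenshtein Levenshtein.defaultCost xs ys + ys.length := by
  intro xs
  induction xs with
  | nil => simp
  | cons a xs ih =>
    intro ys
    induction ys with
    | nil =>
      have := ih []
      simp_all [Levenshtein.defaultCost, levenshtein_cons_nil]
      omega
    | cons b ys ihy =>
      have h1 := ih (b :: ys)
      have h2 := ih ys
      simp only [levenshtein_cons_cons, List.length_cons,
        Levenshtein.defaultCost_delete, Levenshtein.defaultCost_insert] at *
      omega

lemma lev_len_le' {α : Type*} [DecidableEq α] :
    ∀ xs ys : List α,
      ys.length ≤ levenshtein Levenshtein.defaultCost xs ys + xs.length := by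
  intro xs
  induction xs with
  | nil =>
    intro ys
    induction ys with
    | nil => simp
    | cons b ys ihy =>
      simp only [levenshtein_nil_cons, List.length_cons,
        Levenshtein.defaultCost_insert] at *
      omega
  | cons a xs ih =>
    intro ys
    induction ys with
    | nil => simp
    | cons b ys ihy =>
      have h1 := ih (b :: ys)
      have h2 := ih ys
      simp only [levenshtein_cons_cons, List.length_cons,
        Levenshtein.defaultCost_delete, Levenshtein.defaultCost_insert] at *
      omega

theorem stmt_2 {α : Type*} [DecidableEq α] (x y x' y' u v : List α) (C : ℕ) (I : Set ℕ)
    (hI : I.Infinite)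
    (h : ∀ k ∈ I,
      levenshtein Levenshtein.defaultCost (x ++ wpow u k ++ y) (x' ++ wpow v k ++ y') ≤ C) :
    u.length = v.length := by
  by_contra hne
  obtain ⟨k, hkI, hk⟩ :=
    hI.exists_gt (C + x.length + y.length + x'.length + y'.length + 1)
  have hC := h k hkI
  have h1 := lev_len_le (x ++ wpow u k ++ y) (x' ++ wpow v k ++ y')
  have h2 := lev_len_le' (x ++ wpow u k ++ y) (x' ++ wpow v k ++ y')
  simp only [List.length_append, wpow_length] at h1 h2
  rcases Nat.lt_or_ge u.length v.length with hlt | hge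
  · have hm : k * u.length + k ≤ k * v.length := by
      calc k * u.length + k = k * (u.length + 1) := by ring
        _ ≤ k * v.length := Nat.mul_le_mul_left k (by omega)
    omega
  · have hlt : v.length < u.length := lt_of_le_of_ne hge (fun e => hne e.symm)
    have hm : k * v.length + k ≤ k * u.length := by
      calc k * v.length + k = k * (v.length + 1) := by ring
        _ ≤ k * u.length := Nat.mul_le_mul_left k (by omega)
    omega
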